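/- Let c > 0 be a fixed real number, and define a sequence (a_n) of positive reals by a_1 = 1 and a_{n+1} = a_n + c·a_n^{3/4} for every n ≥ 1. Then a_n is asymptotically equivalent to (c n / 4)^4 as n → ∞; that is, lim_{n→∞} a_n / (c n / 4)^4 = 1. -/

import Mathlib

open Filter

/-- The discrete analogue of the ODE g' = c g^{3/4}: the sequence defined by
a 1 = 1 and a (n+1) = a n + c * (a n)^(3/4) satisfies a n ~ (c n / 4)^4. -/
theorem stmt_0 (c : ℝ) (hc : 0 < c) (a : ℕ → ℝ) (ha1 : a 1 = 1)
    (harec : ∀ n : ℕ, 1 ≤ n → a (n + 1) = a n + c * (a n) ^ ((3 : ℝ) / 4)) :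
    Tendsto (fun n : ℕ => a n / (c * n / 4) ^ 4) atTop (nhds 1) := by
  -- a n ≥ 1 for n ≥ 1
  have ha_ge : ∀ n, 1 ≤ n → 1 ≤ a n := by
    intro n hn
    induction n with
    | zero => omega
    | succ m ih =>
      rcases Nat.lt_or_ge 1 (m + 1) with h | h
      · have hm : 1 ≤ m := by omega
        have hma := ih hm
        have hpos : (0:ℝ) < a m ^ ((3:ℝ)/4) :=
          Real.rpow_pos_of_pos (by linarith) _
        have := harec m hm
        nlinarith
      · have : m + 1 = 1 := by omega
        rw [this, ha1]
  -- growth : a n ≥ 1 + c * (n - 1)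
  have ha_grow : ∀ n, 1 ≤ n → 1 + c * (n - 1) ≤ a n := by
    intro n hn
    induction n with
    | zero => omega
    | succ m ih =>
      rcases Nat.lt_or_ge 1 (m + 1) with h | h
      · have hm : 1 ≤ m := by omega
        have hma := ih hm
        have h1 : (1:ℝ) ≤ a m := ha_ge m hm
        have h34 : (1:ℝ) ≤ a m ^ ((3:ℝ)/4) := by
          have := Real.rpow_le_rpow (by norm_num) h1 (by norm_num : (0:ℝ) ≤ 3/4)
          simpa using this
        have := harec m hm
        push_cast
        nlinarith
      · have : m + 1 = 1 := by omega
        rw [this, ha1]; simp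
  have ha_top : Tendsto a atTop atTop := by
    apply tendsto_atTop_mono' atTop (f₁ := fun n : ℕ => 1 + c * ((n:ℝ) - 1))
    · filter_upwards [eventually_ge_atTop 1] with n hn using ha_grow n hn
    · have h1 : Tendsto (fun n : ℕ => (n:ℝ) - 1) atTop atTop := by
        simpa [sub_eq_add_neg] using
          tendsto_atTop_add_const_right atTop (-1 : ℝ) tendsto_natCast_atTop_atTop
      exact tendsto_atTop_add_const_left atTop 1 (h1.const_mul_atTop hc)
  set b : ℕ → ℝ := fun n => (a n) ^ ((1:ℝ)/4) with hb_def
  have hb_pos : ∀ n, 1 ≤ n → 0 < b n := fun n hn =>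
    Real.rpow_pos_of_pos (by linarith [ha_ge n hn]) _
  have hb4 : ∀ n, 1 ≤ n → b n ^ (4:ℕ) = a n := by
    intro n hn
    have h0 : (0:ℝ) ≤ a n := by linarith [ha_ge n hn]
    rw [hb_def]
    rw [← Real.rpow_natCast ((a n) ^ ((1:ℝ)/4)) 4, ← Real.rpow_mul h0]
    norm_num
  have hb_top : Tendsto b atTop atTop :=
    (tendsto_rpow_atTop (by norm_num : (0:ℝ) < 1/4)).comp ha_top
  -- recurrence for b
  have hbrec : ∀ m, 1 ≤ m → b (m + 1) = b m * (1 + c / b m) ^ ((1:ℝ)/4) := by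
    intro m hm
    have hbm := hb_pos m hm
    have h0 : (0:ℝ) ≤ a m := by linarith [ha_ge m hm]
    have h3 : a m ^ ((3:ℝ)/4) = b m ^ (3:ℕ) := by
      rw [hb_def, ← Real.rpow_natCast ((a m) ^ ((1:ℝ)/4)) 3, ← Real.rpow_mul h0]
      norm_num
    have key : a (m + 1) = b m ^ (4:ℕ) * (1 + c / b m) := by
      rw [harec m hm, h3, ← hb4 m hm]
      field_simp
    have h1c : (0:ℝ) ≤ 1 + c / b m := by positivity
    rw [hb_def]
    show (a (m+1)) ^ ((1:ℝ)/4) = _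
    rw [key, Real.mul_rpow (by positivity) h1c,
      ← Real.rpow_natCast (b m) 4, ← Real.rpow_mul (le_of_lt hbm)]
    norm_num
    rfl
  -- the slope function
  have hderiv : HasDerivAt (fun y : ℝ => (1 + y) ^ ((1:ℝ)/4)) (1/4) 0 := by
    have h : HasDerivAt (fun y : ℝ => 1 + y) 1 0 := by
      simpa using (hasDerivAt_id (0:ℝ)).const_add 1
    have := h.rpow_const (p := (1:ℝ)/4) (Or.inl (by norm_num))
    simpa using this
  have hslope : Tendsto (slope (fun y : ℝ => (1 + y) ^ ((1:ℝ)/4)) 0)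
      (nhdsWithin 0 {(0:ℝ)}ᶜ) (nhds (1/4)) :=
    hasDerivAt_iff_tendsto_slope.mp hderiv
  -- c / b m → 0 within {0}ᶜ
  have hcb : Tendsto (fun m : ℕ => c / b m) atTop (nhdsWithin 0 {(0:ℝ)}ᶜ) := by
    rw [tendsto_nhdsWithin_iff]
    constructor
    · exact Tendsto.div_atTop tendsto_const_nhds hb_top
    · filter_upwards [eventually_ge_atTop 1] with m hm
      have := hb_pos m hm
      have : 0 < c / b m := by positivity
      simp only [Set.mem_compl_iff, Set.mem_singleton_iff]
      exact ne_of_gt this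
  -- difference tends to c/4
  have hdiff : Tendsto (fun m : ℕ => b (m + 1) - b m) atTop (nhds (c / 4)) := by
    have hcomp := (hslope.comp hcb).const_mul c
    have : c * (1/4 : ℝ) = c / 4 := by ring
    rw [this] at hcomp
    apply hcomp.congr'
    filter_upwards [eventually_ge_atTop 1] with m hm
    have hbm := hb_pos m hm
    have hx : c / b m ≠ 0 := by positivity
    simp only [Function.comp_apply, slope_def_field]
    rw [hbrec m hm]
    have hc0 : c ≠ 0 := hc.ne'
    have hb0 : b m ≠ 0 := hbm.ne'
    field_simp
    ring_nf
    have e : ∀ X : ℝ, c * X * c⁻¹ = X := fun X => by field_simp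
    rw [e, mul_inv_cancel₀ hc0]
    ring
  -- Cesàro
  have hd : Tendsto (fun n : ℕ => b (n + 2) - b (n + 1)) atTop (nhds (c / 4)) := by
    have := (tendsto_add_atTop_iff_nat 1).mpr hdiff
    exact this
  have hces := hd.cesaro
  have hsum : ∀ n : ℕ, ∑ i ∈ Finset.range n, (b (i + 2) - b (i + 1)) = b (n + 1) - 1 := by
    intro n
    have h := Finset.sum_range_sub (fun i => b (i + 1)) n
    simpa [hb_def, ha1] using h
  have hces' : Tendsto (fun n : ℕ => (b (n+1) - 1) / n) atTop (nhds (c / 4)) := by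
    apply hces.congr
    intro n
    rw [hsum n, inv_mul_eq_div]
  -- b (n+1) / (n+1) → c/4
  have hbn1 : Tendsto (fun n : ℕ => b (n+1) / (n+1)) atTop (nhds (c / 4)) := by
    have h1 : Tendsto (fun n : ℕ => b (n+1) / n) atTop (nhds (c / 4)) := by
      have h2 : Tendsto (fun n : ℕ => (b (n+1) - 1) / n + 1 / n) atTop (nhds (c/4 + 0)) :=
        hces'.add (tendsto_const_nhds.div_atTop tendsto_natCast_atTop_atTop)
      rw [add_zero] at h2
      apply h2.congr'
      filter_upwards [eventually_ge_atTop 1] with n hn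
      have : (n:ℝ) ≠ 0 := Nat.cast_ne_zero.mpr (by omega)
      field_simp
      ring
    have hrat : Tendsto (fun n : ℕ => (n:ℝ) / ((n:ℝ) + 1)) atTop (nhds 1) :=
      tendsto_natCast_div_add_atTop 1
    have h3 := h1.mul hrat
    rw [mul_one] at h3
    apply h3.congr'
    filter_upwards [eventually_ge_atTop 1] with n hn
    have hn0 : (n:ℝ) ≠ 0 := Nat.cast_ne_zero.mpr (by omega)
    have hn1 : (n:ℝ) + 1 ≠ 0 := by positivity
    field_simp
  have hbn : Tendsto (fun n : ℕ => b n / n) atTop (nhds (c / 4)) := by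
    rw [← tendsto_add_atTop_iff_nat 1]
    exact hbn1.congr (fun n => by push_cast; ring_nf)
  -- b n / (c*n/4) → 1
  have hratio : Tendsto (fun n : ℕ => b n / (c * n / 4)) atTop (nhds 1) := by
    have h := hbn.const_mul (4 / c)
    have : (4 / c) * (c / 4) = 1 := by field_simp
    rw [this] at h
    apply h.congr'
    filter_upwards [eventually_ge_atTop 1] with n hn
    have hn0 : (n:ℝ) ≠ 0 := Nat.cast_ne_zero.mpr (by omega)
    field_simp
  have hfinal := hratio.pow 4
  rw [one_pow] at hfinal
  apply hfinal.congr'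
  filter_upwards [eventually_ge_atTop 1] with n hn
  rw [div_pow, hb4 n hn]
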